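/- Augmented inverse probability weighting representation of the GATE (equation behind the AIPW estimator): under unconfoundedness and strict overlap, with μ1(X) = E[Y1 | σ(X)] and μ0(X) = E[Y0 | σ(X)], E[ A·(Y − μ1(X))/π(X) − (1−A)·(Y − μ0(X))/(1 − π(X)) + μ1(X) − μ0(X) | σ(Z) ] = E[Y1 − Y0 | σ(Z)] almost surely. -/

import Mathlib

open MeasureTheory ProbabilityTheory

lemma tower_mul {Ω : Type*} {m : MeasurableSpace Ω} [mΩ : MeasurableSpace Ω]
    (μ : Measure Ω) [IsFiniteMeasure μ] (hm : m ≤ mΩ)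
    {b : Ω → ℝ} (hb : StronglyMeasurable[m] b) {C : ℝ}
    (hbC : ∀ᵐ ω ∂μ, ‖b ω‖ ≤ C)
    {V : Ω → ℝ} (hV : Integrable V μ) :
    ∫ ω, b ω * V ω ∂μ = ∫ ω, b ω * (μ[V|m]) ω ∂μ := by
  have hbV : Integrable (b * V) μ := by
    refine Integrable.mono' (hV.norm.const_mul C)
      (((hb.mono hm).aestronglyMeasurable).mul hV.1) ?_
    filter_upwards [hbC] with ω h
    rw [Pi.mul_apply, norm_mul]
    exact mul_le_mul_of_nonneg_right h (norm_nonneg _)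
  have h := condExp_mul_of_stronglyMeasurable_left (μ := μ) hb hbV hV
  calc ∫ ω, b ω * V ω ∂μ = ∫ ω, (μ[b * V|m]) ω ∂μ := (integral_condExp hm).symm
    _ = ∫ ω, b ω * (μ[V|m]) ω ∂μ := integral_congr_ae h

lemma integral_indicator' {α : Type*} (mα : MeasurableSpace α) (μ : Measure α)
    {s : Set α} (hs : MeasurableSet s) (f : α → ℝ) :
    ∫ x in s, f x ∂μ = ∫ x, s.indicator f x ∂μ :=
  (integral_indicator hs).symm

lemma tower_mul_set {Ω : Type*} {m : MeasurableSpace Ω} [mΩ : MeasurableSpace Ω]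
    (μ : Measure Ω) [IsFiniteMeasure μ] (hm : m ≤ mΩ)
    {b : Ω → ℝ} (hb : StronglyMeasurable[m] b) {C : ℝ}
    (hbC : ∀ᵐ ω ∂μ, ‖b ω‖ ≤ C)
    {V : Ω → ℝ} (hV : Integrable V μ) {s : Set Ω} (hs : MeasurableSet[m] s) :
    ∫ ω in s, b ω * V ω ∂μ = ∫ ω in s, b ω * (μ[V|m]) ω ∂μ := by
  have h1 : ∀ V' : Ω → ℝ,
      s.indicator (fun ω => b ω * V' ω) = fun ω => s.indicator b ω * V' ω := by
    intro V'; funext ω; by_cases h : ω ∈ s <;> simp [Set.indicator_apply, h]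
  have hsΩ : MeasurableSet[mΩ] s := hm s hs
  rw [integral_indicator' mΩ μ hsΩ, integral_indicator' mΩ μ hsΩ, h1, h1]
  refine tower_mul (mΩ := mΩ) μ hm (hb.indicator hs) (C := max C 0) ?_ hV
  filter_upwards [hbC] with ω h
  by_cases hω : ω ∈ s
  · rw [Set.indicator_of_mem hω]; exact le_max_of_le_left h
  · rw [Set.indicator_of_notMem hω, norm_zero]; exact le_max_right _ _

lemma key_setIntegral {Ω : Type*} {m : MeasurableSpace Ω} [mΩ : MeasurableSpace Ω]
    [StandardBorelSpace Ω] (μ : Measure Ω) [IsProbabilityMeasure μ]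
    (hm : m ≤ mΩ)
    {A : Ω → ℝ} (hAm : Measurable A) (hA01 : ∀ ω, A ω = 0 ∨ A ω = 1)
    {W : Ω → ℝ × ℝ} (hWm : Measurable W)
    (hindep : CondIndepFun m hm A W μ)
    {ψ : ℝ × ℝ → ℝ} (hψ : Integrable ψ (μ.map W)) :
    ∀ s : Set Ω, MeasurableSet[m] s →
      ∫ ω in s, A ω * ψ (W ω) ∂μ = ∫ ω in s, (μ[A|m]) ω * ψ (W ω) ∂μ := by
  have hA1 : ∀ ω, ‖A ω‖ ≤ 1 := fun ω => by rcases hA01 ω with h|h <;> simp [h]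
  have hA0 : ∀ ω, 0 ≤ A ω := fun ω => by rcases hA01 ω with h|h <;> simp [h]
  have hAle : ∀ ω, A ω ≤ 1 := fun ω => by rcases hA01 ω with h|h <;> simp [h]
  have hA_int : Integrable A μ :=
    Integrable.mono' (integrable_const 1) hAm.aestronglyMeasurable (ae_of_all _ hA1)
  have hπSM : StronglyMeasurable[m] (μ[A|m]) := stronglyMeasurable_condExp
  have hπm : AEStronglyMeasurable (μ[A|m]) μ := (hπSM.mono hm).aestronglyMeasurable
  have hπ1 : ∀ᵐ ω ∂μ, ‖(μ[A|m]) ω‖ ≤ 1 := by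
    have h0 : (0 : Ω → ℝ) ≤ᵐ[μ] μ[A|m] := condExp_nonneg (ae_of_all _ hA0)
    have h1 : μ[A|m] ≤ᵐ[μ] μ[(fun _ : Ω => (1:ℝ))|m] :=
      condExp_mono hA_int (integrable_const 1) (ae_of_all _ hAle)
    rw [condExp_const hm] at h1
    filter_upwards [h0, h1] with ω ha hb
    rw [Real.norm_eq_abs, abs_le]
    have h0' : (0:ℝ) ≤ (μ[A|m]) ω := by simpa using ha
    exact ⟨by linarith, hb⟩
  have hcomp : ∀ {φ : ℝ×ℝ → ℝ}, Integrable φ (μ.map W) → Integrable (fun ω => φ (W ω)) μ :=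
    fun h => (integrable_map_measure h.1 hWm.aemeasurable).mp h
  refine Integrable.induction (μ := μ.map W)
    (P := fun φ => ∀ s : Set Ω, MeasurableSet[m] s →
      ∫ ω in s, A ω * φ (W ω) ∂μ = ∫ ω in s, (μ[A|m]) ω * φ (W ω) ∂μ) ?_ ?_ ?_ ?_ hψ
  · -- indicator case
    intro c t ht hνt s hs
    set u : Ω → ℝ := (W ⁻¹' t).indicator (fun _ => (1:ℝ)) with hu_def
    have hWt : MeasurableSet (W ⁻¹' t) := hWm ht
    have hu_int : Integrable u μ := (integrable_const (1:ℝ)).indicator hWt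
    have hptw : ∀ ω : Ω, Set.indicator t (fun _ => c) (W ω) = c * u ω := by
      intro ω; by_cases h : W ω ∈ t <;>
        simp [hu_def, Set.indicator_apply, h, Set.mem_preimage]
    simp only [hptw]
    have hrw : ∀ b : Ω → ℝ, (fun ω => b ω * (c * u ω)) = fun ω => c * (b ω * u ω) :=
      fun b => funext fun ω => by ring
    calc ∫ ω in s, A ω * (c * u ω) ∂μ
        = ∫ ω in s, c * (A ω * u ω) ∂μ := by rw [hrw]
      _ = c * ∫ ω in s, A ω * u ω ∂μ := integral_const_mul _ _
      _ = c * ∫ ω in s, (μ[A|m]) ω * u ω ∂μ := ?_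
      _ = ∫ ω in s, c * ((μ[A|m]) ω * u ω) ∂μ := (integral_const_mul _ _).symm
      _ = ∫ ω in s, (μ[A|m]) ω * (c * u ω) ∂μ := by rw [← hrw]
    congr 1
    -- core equality
    set T : Set Ω := A ⁻¹' {1} with hT
    have hTm : MeasurableSet T := hAm (measurableSet_singleton 1)
    have hAind : A = T.indicator (fun _ => (1:ℝ)) := by
      funext ω; rcases hA01 ω with h|h
      · have hω : ω ∉ T := by simp [hT, Set.mem_preimage, h]
        rw [Set.indicator_of_notMem hω, h]
      · have hω : ω ∈ T := by simp [hT, Set.mem_preimage, h]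
        rw [Set.indicator_of_mem hω, h]
    have hAu : (fun ω => A ω * u ω) = (T ∩ W ⁻¹' t).indicator (fun _ => (1:ℝ)) := by
      funext ω
      rcases hA01 ω with h|h
      · have hω : ω ∉ T := by simp [hT, Set.mem_preimage, h]
        simp [Set.indicator_apply, Set.mem_inter_iff, h, hω]
      · have hω : ω ∈ T := by simp [hT, Set.mem_preimage, h]
        by_cases h2 : ω ∈ W ⁻¹' t <;>
          simp [hu_def, Set.indicator_apply, Set.mem_inter_iff, h, hω, h2]
    have hI := (condIndepFun_iff_condExp_inter_preimage_eq_mul (μ := μ) hAm hWm).mp hindep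
      {1} t (measurableSet_singleton 1) ht
    have hπT : μ[T.indicator (fun _ => (1:ℝ))|m] = μ[A|m] := by rw [← hAind]
    have hI' : μ[(T ∩ W ⁻¹' t).indicator (fun _ => (1:ℝ))|m]
        =ᵐ[μ] fun ω => (μ[A|m]) ω * (μ[u|m]) ω := by
      rw [← hπT]
      exact hI
    have hind_int : Integrable ((T ∩ W ⁻¹' t).indicator (fun _ => (1:ℝ))) μ :=
      (integrable_const (1:ℝ)).indicator (hTm.inter hWt)
    calc ∫ ω in s, A ω * u ω ∂μ
        = ∫ ω in s, (T ∩ W ⁻¹' t).indicator (fun _ => (1:ℝ)) ω ∂μ := by rw [hAu]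
      _ = ∫ ω in s, (μ[(T ∩ W ⁻¹' t).indicator (fun _ => (1:ℝ))|m]) ω ∂μ :=
          (setIntegral_condExp hm hind_int hs).symm
      _ = ∫ ω in s, (μ[A|m]) ω * (μ[u|m]) ω ∂μ :=
          integral_congr_ae (ae_restrict_of_ae hI')
      _ = ∫ ω in s, (μ[A|m]) ω * u ω ∂μ :=
          (tower_mul_set (mΩ := mΩ) μ hm hπSM (C := 1) hπ1 hu_int hs).symm
  · -- additivity
    intro f1 f2 _ hf1 hf2 h1 h2 s hs
    have hif1 : Integrable (fun ω => f1 (W ω)) μ := hcomp hf1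
    have hif2 : Integrable (fun ω => f2 (W ω)) μ := hcomp hf2
    have hmul : ∀ (b : Ω → ℝ), AEStronglyMeasurable b μ → (∀ᵐ ω ∂μ, ‖b ω‖ ≤ 1) →
        ∀ {φ : ℝ×ℝ → ℝ}, Integrable (fun ω => φ (W ω)) μ →
        Integrable (fun ω => b ω * φ (W ω)) μ := by
      intro b hbm hb1 φ hφ
      refine Integrable.mono' hφ.norm (hbm.mul hφ.1) ?_
      filter_upwards [hb1] with ω h
      calc ‖b ω * φ (W ω)‖ = ‖b ω‖ * ‖φ (W ω)‖ := norm_mul _ _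
        _ ≤ 1 * ‖φ (W ω)‖ := by gcongr
        _ = ‖φ (W ω)‖ := one_mul _
    have e1 : ∀ (b : Ω → ℝ), AEStronglyMeasurable b μ → (∀ᵐ ω ∂μ, ‖b ω‖ ≤ 1) →
        ∫ ω in s, b ω * (f1 + f2) (W ω) ∂μ
          = ∫ ω in s, b ω * f1 (W ω) ∂μ + ∫ ω in s, b ω * f2 (W ω) ∂μ := by
      intro b hbm hb1
      rw [← integral_add ((hmul b hbm hb1 hif1).integrableOn)
        ((hmul b hbm hb1 hif2).integrableOn)]
      congr 1; funext ω; simp [Pi.add_apply, mul_add]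
    rw [e1 A hAm.aestronglyMeasurable (ae_of_all _ hA1), e1 _ hπm hπ1, h1 s hs, h2 s hs]
  · -- closedness
    have cont : ∀ (b : Ω → ℝ), AEStronglyMeasurable b μ → (∀ᵐ ω ∂μ, ‖b ω‖ ≤ 1) →
        ∀ s : Set Ω, MeasurableSet[m] s →
        Continuous (fun f : (ℝ×ℝ) →₁[μ.map W] ℝ => ∫ ω in s, b ω * f (W ω) ∂μ) := by
      intro b hbm hb1 s hs
      refine (LipschitzWith.of_dist_le_mul (K := 1) ?_).continuous
      intro f g
      have hfW : Integrable (fun ω => f (W ω)) μ := hcomp (L1.integrable_coeFn f)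
      have hgW : Integrable (fun ω => g (W ω)) μ := hcomp (L1.integrable_coeFn g)
      have hbmul : ∀ {φ : Ω → ℝ}, Integrable φ μ → Integrable (fun ω => b ω * φ ω) μ := by
        intro φ hφ
        refine Integrable.mono' hφ.norm (hbm.mul hφ.1) ?_
        filter_upwards [hb1] with ω h
        calc ‖b ω * φ ω‖ = ‖b ω‖ * ‖φ ω‖ := norm_mul _ _
          _ ≤ 1 * ‖φ ω‖ := by gcongr
          _ = ‖φ ω‖ := one_mul _
      have hbf := hbmul hfW
      have hbg := hbmul hgW
      have hbd := hbmul (hfW.sub hgW)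
      rw [Real.dist_eq, dist_eq_norm]
      have hsub : ∫ ω in s, b ω * f (W ω) ∂μ - ∫ ω in s, b ω * g (W ω) ∂μ
          = ∫ ω in s, b ω * (f (W ω) - g (W ω)) ∂μ := by
        rw [← integral_sub hbf.integrableOn hbg.integrableOn]
        congr 1; funext ω; ring
      rw [hsub]
      have hmain : |∫ ω in s, b ω * (f (W ω) - g (W ω)) ∂μ| ≤ ‖f - g‖ := by
        calc |∫ ω in s, b ω * (f (W ω) - g (W ω)) ∂μ|
            ≤ ∫ ω in s, ‖b ω * (f (W ω) - g (W ω))‖ ∂μ := by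
              rw [← Real.norm_eq_abs]; exact norm_integral_le_integral_norm _
          _ ≤ ∫ ω in s, ‖f (W ω) - g (W ω)‖ ∂μ := by
              refine integral_mono_ae hbd.norm.integrableOn (hfW.sub hgW).norm.integrableOn ?_
              refine ae_restrict_of_ae ?_
              filter_upwards [hb1] with ω h
              calc ‖b ω * (f (W ω) - g (W ω))‖ = ‖b ω‖ * ‖f (W ω) - g (W ω)‖ := norm_mul _ _
                _ ≤ 1 * ‖f (W ω) - g (W ω)‖ := by gcongr
                _ = ‖f (W ω) - g (W ω)‖ := one_mul _
          _ ≤ ∫ ω, ‖f (W ω) - g (W ω)‖ ∂μ :=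
              setIntegral_le_integral (hfW.sub hgW).norm (ae_of_all _ fun ω => norm_nonneg _)
          _ = ∫ p, ‖f p - g p‖ ∂(μ.map W) :=
              (integral_map hWm.aemeasurable
                ((Lp.aestronglyMeasurable f).sub (Lp.aestronglyMeasurable g)).norm).symm
          _ = ‖f - g‖ := by
              rw [L1.norm_eq_integral_norm]
              refine integral_congr_ae ?_
              filter_upwards [Lp.coeFn_sub f g] with p hp
              rw [hp, Pi.sub_apply]
      exact hmain.trans (by simp)
    have hset : {f : (ℝ×ℝ) →₁[μ.map W] ℝ | ∀ s : Set Ω, MeasurableSet[m] s →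
          ∫ ω in s, A ω * f (W ω) ∂μ = ∫ ω in s, (μ[A|m]) ω * f (W ω) ∂μ}
        = ⋂ (s : Set Ω) (_ : MeasurableSet[m] s),
          {f : (ℝ×ℝ) →₁[μ.map W] ℝ |
            ∫ ω in s, A ω * f (W ω) ∂μ = ∫ ω in s, (μ[A|m]) ω * f (W ω) ∂μ} := by
      ext f; simp only [Set.mem_setOf_eq, Set.mem_iInter]
    rw [hset]
    exact isClosed_iInter fun s => isClosed_iInter fun hs =>
      isClosed_eq (cont A hAm.aestronglyMeasurable (ae_of_all _ hA1) s hs) (cont _ hπm hπ1 s hs)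
  · -- a.e. congruence
    intro f1 f2 hfe _ h s hs
    have he : (fun ω => f1 (W ω)) =ᵐ[μ] (fun ω => f2 (W ω)) := ae_eq_comp hWm.aemeasurable hfe
    have e1 : ∀ b : Ω → ℝ, ∫ ω in s, b ω * f1 (W ω) ∂μ = ∫ ω in s, b ω * f2 (W ω) ∂μ := by
      intro b
      refine integral_congr_ae (ae_restrict_of_ae ?_)
      filter_upwards [he] with ω hω
      rw [show f1 (W ω) = f2 (W ω) from hω]
    rw [← e1 A, ← e1 _]
    exact h s hs

lemma condexp_mul_of_condIndep {Ω : Type*} {m : MeasurableSpace Ω} [mΩ : MeasurableSpace Ω]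
    [StandardBorelSpace Ω] (μ : Measure Ω) [IsProbabilityMeasure μ]
    (hm : m ≤ mΩ)
    {A : Ω → ℝ} (hAm : Measurable A) (hA01 : ∀ ω, A ω = 0 ∨ A ω = 1)
    {W : Ω → ℝ × ℝ} (hWm : Measurable W)
    (hindep : CondIndepFun m hm A W μ)
    {ψ : ℝ × ℝ → ℝ} (hψ : Integrable ψ (μ.map W)) :
    μ[fun ω => A ω * ψ (W ω)|m]
      =ᵐ[μ] fun ω => (μ[A|m]) ω * (μ[fun ω' => ψ (W ω')|m]) ω := by
  have hA1 : ∀ ω, ‖A ω‖ ≤ 1 := fun ω => by rcases hA01 ω with h|h <;> simp [h]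
  have hA0 : ∀ ω, 0 ≤ A ω := fun ω => by rcases hA01 ω with h|h <;> simp [h]
  have hAle : ∀ ω, A ω ≤ 1 := fun ω => by rcases hA01 ω with h|h <;> simp [h]
  have hA_int : Integrable A μ :=
    Integrable.mono' (integrable_const 1) hAm.aestronglyMeasurable (ae_of_all _ hA1)
  have hπ1 : ∀ᵐ ω ∂μ, ‖(μ[A|m]) ω‖ ≤ 1 := by
    have h0 : (0 : Ω → ℝ) ≤ᵐ[μ] μ[A|m] := condExp_nonneg (ae_of_all _ hA0)
    have h1 : μ[A|m] ≤ᵐ[μ] μ[(fun _ : Ω => (1:ℝ))|m] :=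
      condExp_mono hA_int (integrable_const 1) (ae_of_all _ hAle)
    rw [condExp_const hm] at h1
    filter_upwards [h0, h1] with ω ha hb
    have h0' : (0:ℝ) ≤ (μ[A|m]) ω := by simpa using ha
    rw [Real.norm_eq_abs, abs_le]
    exact ⟨by linarith, hb⟩
  have hψW : Integrable (fun ω => ψ (W ω)) μ :=
    (integrable_map_measure hψ.1 hWm.aemeasurable).mp hψ
  have hAψ : Integrable (fun ω => A ω * ψ (W ω)) μ := by
    refine Integrable.mono' hψW.norm (hAm.aestronglyMeasurable.mul hψW.1) (ae_of_all _ ?_)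
    intro ω
    calc ‖A ω * ψ (W ω)‖ = ‖A ω‖ * ‖ψ (W ω)‖ := norm_mul _ _
      _ ≤ 1 * ‖ψ (W ω)‖ := by gcongr; exact hA1 ω
      _ = ‖ψ (W ω)‖ := one_mul _
  refine (ae_eq_condExp_of_forall_setIntegral_eq (μ := μ) (E := ℝ) hm hAψ
    (g := fun ω => (μ[A|m]) ω * (μ[fun ω' => ψ (W ω')|m]) ω) ?_ ?_ ?_).symm
  · intro s _ _
    refine (Integrable.mono'
      (integrable_condExp (μ := μ) (m := m) (f := fun ω' => ψ (W ω'))).norm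
      (((stronglyMeasurable_condExp.mono hm).aestronglyMeasurable).mul
        ((stronglyMeasurable_condExp.mono hm).aestronglyMeasurable)) ?_).integrableOn
    filter_upwards [hπ1] with ω h
    calc ‖(μ[A|m]) ω * (μ[fun ω' => ψ (W ω')|m]) ω‖
        = ‖(μ[A|m]) ω‖ * ‖(μ[fun ω' => ψ (W ω')|m]) ω‖ := norm_mul _ _
      _ ≤ 1 * ‖(μ[fun ω' => ψ (W ω')|m]) ω‖ := by gcongr
      _ = ‖(μ[fun ω' => ψ (W ω')|m]) ω‖ := one_mul _
  · intro s hs _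
    calc ∫ ω in s, (μ[A|m]) ω * (μ[fun ω' => ψ (W ω')|m]) ω ∂μ
        = ∫ ω in s, (μ[A|m]) ω * ψ (W ω) ∂μ :=
          (tower_mul_set (mΩ := mΩ) μ hm stronglyMeasurable_condExp (C := 1) hπ1 hψW hs).symm
      _ = ∫ ω in s, A ω * ψ (W ω) ∂μ :=
          (key_setIntegral (mΩ := mΩ) μ hm hAm hA01 hWm hindep hψ s hs).symm
  · exact (stronglyMeasurable_condExp.mul stronglyMeasurable_condExp).aestronglyMeasurable

lemma aipw_core {Ω : Type*} {m mZ : MeasurableSpace Ω} [mΩ : MeasurableSpace Ω]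
    [StandardBorelSpace Ω] (μ : Measure Ω) [IsProbabilityMeasure μ]
    (hm : m ≤ mΩ) (hZ : mZ ≤ m)
    {A : Ω → ℝ} (hAm : Measurable A) (hA01 : ∀ ω, A ω = 0 ∨ A ω = 1)
    {Y0 Y1 : Ω → ℝ} (hY0m : Measurable Y0) (hY1m : Measurable Y1)
    (hY0i : Integrable Y0 μ) (hY1i : Integrable Y1 μ)
    {Y : Ω → ℝ} (hYdef : ∀ ω, Y ω = A ω * Y1 ω + (1 - A ω) * Y0 ω)
    (hindep : CondIndepFun m hm A (fun ω => (Y0 ω, Y1 ω)) μ)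
    {δ : ℝ} (hδ0 : 0 < δ)
    (hover : ∀ᵐ ω ∂μ, δ ≤ (μ[A|m]) ω ∧ (μ[A|m]) ω ≤ 1 - δ) :
    μ[fun ω => A ω * (Y ω - (μ[Y1|m]) ω) / (μ[A|m]) ω
        - (1 - A ω) * (Y ω - (μ[Y0|m]) ω) / (1 - (μ[A|m]) ω)
        + (μ[Y1|m]) ω - (μ[Y0|m]) ω | mZ]
      =ᵐ[μ] μ[fun ω => Y1 ω - Y0 ω | mZ] := by
  have hA1 : ∀ ω, ‖A ω‖ ≤ 1 := fun ω => by rcases hA01 ω with h|h <;> simp [h]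
  have hA1' : ∀ ω, ‖1 - A ω‖ ≤ 1 := fun ω => by rcases hA01 ω with h|h <;> simp [h]
  have hA_int : Integrable A μ :=
    Integrable.mono' (integrable_const 1) hAm.aestronglyMeasurable (ae_of_all _ hA1)
  have hW : Measurable (fun ω => (Y0 ω, Y1 ω)) := hY0m.prodMk hY1m
  -- integrability of the coordinates w.r.t. the image measure
  have hψ1 : Integrable (fun p : ℝ × ℝ => p.2) (μ.map (fun ω => (Y0 ω, Y1 ω))) := by
    refine (integrable_map_measure measurable_snd.aestronglyMeasurable hW.aemeasurable).mpr ?_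
    exact hY1i
  have hψ0 : Integrable (fun p : ℝ × ℝ => p.1) (μ.map (fun ω => (Y0 ω, Y1 ω))) := by
    refine (integrable_map_measure measurable_fst.aestronglyMeasurable hW.aemeasurable).mpr ?_
    exact hY0i
  have hfac1 : μ[fun ω => A ω * Y1 ω|m] =ᵐ[μ] fun ω => (μ[A|m]) ω * (μ[Y1|m]) ω :=
    condexp_mul_of_condIndep (mΩ := mΩ) μ hm hAm hA01 hW hindep hψ1
  have hfac0 : μ[fun ω => A ω * Y0 ω|m] =ᵐ[μ] fun ω => (μ[A|m]) ω * (μ[Y0|m]) ω :=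
    condexp_mul_of_condIndep (mΩ := mΩ) μ hm hAm hA01 hW hindep hψ0
  -- E[A (V - E[V|m]) | m] = 0
  have hzero : ∀ (V : Ω → ℝ), Integrable V μ → AEStronglyMeasurable V μ →
      (μ[fun ω => A ω * V ω|m] =ᵐ[μ] fun ω => (μ[A|m]) ω * (μ[V|m]) ω) →
      μ[fun ω => A ω * (V ω - (μ[V|m]) ω)|m] =ᵐ[μ] 0 := by
    intro V hV hVm hfac
    have hκi : Integrable (μ[V|m]) μ := integrable_condExp
    have hAV : Integrable (fun ω => A ω * V ω) μ := by
      refine Integrable.mono' hV.norm (hAm.aestronglyMeasurable.mul hVm) (ae_of_all _ ?_)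
      intro ω
      calc ‖A ω * V ω‖ = ‖A ω‖ * ‖V ω‖ := norm_mul _ _
        _ ≤ 1 * ‖V ω‖ := by gcongr; exact hA1 ω
        _ = ‖V ω‖ := one_mul _
    have hκA : Integrable ((μ[V|m]) * A) μ := by
      refine Integrable.mono' hκi.norm
        (((stronglyMeasurable_condExp.mono hm).aestronglyMeasurable).mul
          hAm.aestronglyMeasurable) (ae_of_all _ ?_)
      intro ω
      calc ‖(μ[V|m]) ω * A ω‖ = ‖(μ[V|m]) ω‖ * ‖A ω‖ := norm_mul _ _
        _ ≤ ‖(μ[V|m]) ω‖ * 1 := by gcongr; exact hA1 ω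
        _ = ‖(μ[V|m]) ω‖ := mul_one _
    have hpull : μ[(μ[V|m]) * A|m] =ᵐ[μ] (μ[V|m]) * μ[A|m] :=
      condExp_mul_of_stronglyMeasurable_left stronglyMeasurable_condExp hκA hA_int
    have hsplit : (fun ω => A ω * (V ω - (μ[V|m]) ω))
        = (fun ω => A ω * V ω) - ((μ[V|m]) * A) := by
      funext ω; simp only [Pi.sub_apply, Pi.mul_apply]; ring
    rw [hsplit]
    calc μ[(fun ω => A ω * V ω) - ((μ[V|m]) * A)|m]
        =ᵐ[μ] μ[fun ω => A ω * V ω|m] - μ[(μ[V|m]) * A|m] := condExp_sub hAV hκA m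
      _ =ᵐ[μ] 0 := by
        filter_upwards [hfac, hpull] with ω h1 h2
        simp only [Pi.sub_apply, Pi.zero_apply, Pi.mul_apply, h1, h2]
        ring
  have hz1 : μ[fun ω => A ω * (Y1 ω - (μ[Y1|m]) ω)|m] =ᵐ[μ] 0 :=
    hzero Y1 hY1i hY1m.aestronglyMeasurable hfac1
  have hz0 : μ[fun ω => A ω * (Y0 ω - (μ[Y0|m]) ω)|m] =ᵐ[μ] 0 :=
    hzero Y0 hY0i hY0m.aestronglyMeasurable hfac0
  -- E[(Y0 - E[Y0|m]) | m] = 0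
  have hsub0 : μ[(fun ω => Y0 ω - (μ[Y0|m]) ω)|m] =ᵐ[μ] 0 := by
    calc μ[(fun ω => Y0 ω - (μ[Y0|m]) ω)|m]
        =ᵐ[μ] μ[Y0|m] - μ[μ[Y0|m]|m] := condExp_sub hY0i integrable_condExp m
      _ =ᵐ[μ] 0 := by
        rw [condExp_of_stronglyMeasurable hm stronglyMeasurable_condExp integrable_condExp]
        filter_upwards with ω
        simp
  -- integrability of the centered products
  have hintc : ∀ (V : Ω → ℝ), Measurable V → Integrable V μ → ∀ (B : Ω → ℝ), Measurable B →
      (∀ ω, ‖B ω‖ ≤ 1) → Integrable (fun ω => B ω * (V ω - (μ[V|m]) ω)) μ := by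
    intro V hVmeas hV B hBmeas hB1
    have hκm : Measurable (μ[V|m]) := (stronglyMeasurable_condExp.mono hm).measurable
    refine Integrable.mono' (hV.sub (integrable_condExp (μ := μ) (m := m) (f := V))).norm
      (hBmeas.aestronglyMeasurable.mul ((hVmeas.sub hκm).aestronglyMeasurable))
      (ae_of_all _ ?_)
    intro ω
    calc ‖B ω * (V ω - (μ[V|m]) ω)‖ = ‖B ω‖ * ‖V ω - (μ[V|m]) ω‖ := norm_mul _ _
      _ ≤ 1 * ‖V ω - (μ[V|m]) ω‖ := by gcongr; exact hB1 ω
      _ = ‖V ω - (μ[V|m]) ω‖ := one_mul _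
  have hint1 : Integrable (fun ω => A ω * (Y1 ω - (μ[Y1|m]) ω)) μ :=
    hintc Y1 hY1m hY1i A hAm hA1
  have hint0A : Integrable (fun ω => A ω * (Y0 ω - (μ[Y0|m]) ω)) μ :=
    hintc Y0 hY0m hY0i A hAm hA1
  have hint0 : Integrable (fun ω => (1 - A ω) * (Y0 ω - (μ[Y0|m]) ω)) μ :=
    hintc Y0 hY0m hY0i (fun ω => 1 - A ω) (measurable_const.sub hAm) hA1'
  -- E[(1-A)(Y0 - μ0)|m] = 0
  have hz0' : μ[fun ω => (1 - A ω) * (Y0 ω - (μ[Y0|m]) ω)|m] =ᵐ[μ] 0 := by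
    have hsplit : (fun ω => (1 - A ω) * (Y0 ω - (μ[Y0|m]) ω))
        = (fun ω => Y0 ω - (μ[Y0|m]) ω) - (fun ω => A ω * (Y0 ω - (μ[Y0|m]) ω)) := by
      funext ω; simp only [Pi.sub_apply]; ring
    rw [hsplit]
    calc μ[(fun ω => Y0 ω - (μ[Y0|m]) ω) - (fun ω => A ω * (Y0 ω - (μ[Y0|m]) ω))|m]
        =ᵐ[μ] μ[(fun ω => Y0 ω - (μ[Y0|m]) ω)|m]
          - μ[fun ω => A ω * (Y0 ω - (μ[Y0|m]) ω)|m] :=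
        condExp_sub (hY0i.sub integrable_condExp) hint0A m
      _ =ᵐ[μ] 0 := by
        filter_upwards [hsub0, hz0] with ω h1 h2
        simp only [Pi.sub_apply, Pi.zero_apply] at h1 h2 ⊢
        simp [h1, h2]
  -- pulling out m-measurable bounded factors of zero-conditional-expectation terms
  have hpull0 : ∀ (r h : Ω → ℝ), StronglyMeasurable[m] r → (∀ᵐ ω ∂μ, ‖r ω‖ ≤ δ⁻¹) →
      Integrable h μ → (μ[h|m] =ᵐ[μ] 0) →
      Integrable (fun ω => r ω * h ω) μ ∧ μ[fun ω => r ω * h ω|m] =ᵐ[μ] 0 := by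
    intro r h hrm hrb hh hh0
    have hint : Integrable (r * h) μ := by
      refine Integrable.mono' (hh.norm.const_mul δ⁻¹)
        (((hrm.mono hm).aestronglyMeasurable).mul hh.1) ?_
      filter_upwards [hrb] with ω hω
      calc ‖(r * h) ω‖ = ‖r ω‖ * ‖h ω‖ := norm_mul _ _
        _ ≤ δ⁻¹ * ‖h ω‖ := mul_le_mul_of_nonneg_right hω (norm_nonneg _)
    refine ⟨hint, ?_⟩
    calc μ[fun ω => r ω * h ω|m] =ᵐ[μ] r * μ[h|m] :=
        condExp_mul_of_stronglyMeasurable_left hrm hint hh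
      _ =ᵐ[μ] 0 := by
        filter_upwards [hh0] with ω hω
        simp only [Pi.mul_apply, Pi.zero_apply] at *
        rw [hω, mul_zero]
  have hrb1 : ∀ᵐ ω ∂μ, ‖((μ[A|m]) ω)⁻¹‖ ≤ δ⁻¹ := by
    filter_upwards [hover] with ω h
    have hπpos : 0 < (μ[A|m]) ω := lt_of_lt_of_le hδ0 h.1
    rw [Real.norm_eq_abs, abs_of_pos (inv_pos.mpr hπpos)]
    exact inv_anti₀ hδ0 h.1
  have hrb0 : ∀ᵐ ω ∂μ, ‖(1 - (μ[A|m]) ω)⁻¹‖ ≤ δ⁻¹ := by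
    filter_upwards [hover] with ω h
    have hπpos : 0 < 1 - (μ[A|m]) ω := by linarith [h.2]
    rw [Real.norm_eq_abs, abs_of_pos (inv_pos.mpr hπpos)]
    exact inv_anti₀ hδ0 (by linarith [h.2])
  have hrm1 : StronglyMeasurable[m] (fun ω => ((μ[A|m]) ω)⁻¹) :=
    (stronglyMeasurable_condExp.measurable.inv).stronglyMeasurable
  have hrm0 : StronglyMeasurable[m] (fun ω => (1 - (μ[A|m]) ω)⁻¹) :=
    ((measurable_const.sub stronglyMeasurable_condExp.measurable).inv).stronglyMeasurable
  obtain ⟨hG1i, hG1⟩ := hpull0 _ _ hrm1 hrb1 hint1 hz1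
  obtain ⟨hG0i, hG0⟩ := hpull0 _ _ hrm0 hrb0 hint0 hz0'
  -- core identity at level m
  have hcore : μ[fun ω => ((μ[A|m]) ω)⁻¹ * (A ω * (Y1 ω - (μ[Y1|m]) ω))
        - (1 - (μ[A|m]) ω)⁻¹ * ((1 - A ω) * (Y0 ω - (μ[Y0|m]) ω))
        + ((μ[Y1|m]) ω - (μ[Y0|m]) ω)|m]
      =ᵐ[μ] μ[fun ω => Y1 ω - Y0 ω|m] := by
    have hsplit : (fun ω => ((μ[A|m]) ω)⁻¹ * (A ω * (Y1 ω - (μ[Y1|m]) ω))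
          - (1 - (μ[A|m]) ω)⁻¹ * ((1 - A ω) * (Y0 ω - (μ[Y0|m]) ω))
          + ((μ[Y1|m]) ω - (μ[Y0|m]) ω))
        = ((fun ω => ((μ[A|m]) ω)⁻¹ * (A ω * (Y1 ω - (μ[Y1|m]) ω)))
            - (fun ω => (1 - (μ[A|m]) ω)⁻¹ * ((1 - A ω) * (Y0 ω - (μ[Y0|m]) ω))))
          + (fun ω => (μ[Y1|m]) ω - (μ[Y0|m]) ω) := by
      funext ω; simp only [Pi.add_apply, Pi.sub_apply]
    rw [hsplit]
    have hmid : Integrable ((fun ω => ((μ[A|m]) ω)⁻¹ * (A ω * (Y1 ω - (μ[Y1|m]) ω)))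
        - (fun ω => (1 - (μ[A|m]) ω)⁻¹ * ((1 - A ω) * (Y0 ω - (μ[Y0|m]) ω)))) μ :=
      hG1i.sub hG0i
    have hμdiff : Integrable (fun ω => (μ[Y1|m]) ω - (μ[Y0|m]) ω) μ :=
      integrable_condExp.sub integrable_condExp
    calc μ[((fun ω => ((μ[A|m]) ω)⁻¹ * (A ω * (Y1 ω - (μ[Y1|m]) ω)))
            - (fun ω => (1 - (μ[A|m]) ω)⁻¹ * ((1 - A ω) * (Y0 ω - (μ[Y0|m]) ω))))
          + (fun ω => (μ[Y1|m]) ω - (μ[Y0|m]) ω)|m]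
        =ᵐ[μ] μ[(fun ω => ((μ[A|m]) ω)⁻¹ * (A ω * (Y1 ω - (μ[Y1|m]) ω)))
            - (fun ω => (1 - (μ[A|m]) ω)⁻¹ * ((1 - A ω) * (Y0 ω - (μ[Y0|m]) ω)))|m]
          + μ[fun ω => (μ[Y1|m]) ω - (μ[Y0|m]) ω|m] := condExp_add hmid hμdiff m
      _ =ᵐ[μ] (μ[fun ω => ((μ[A|m]) ω)⁻¹ * (A ω * (Y1 ω - (μ[Y1|m]) ω))|m]
            - μ[fun ω => (1 - (μ[A|m]) ω)⁻¹ * ((1 - A ω) * (Y0 ω - (μ[Y0|m]) ω))|m])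
          + μ[fun ω => (μ[Y1|m]) ω - (μ[Y0|m]) ω|m] := by
          filter_upwards [condExp_sub hG1i hG0i (m := m)] with ω hω
          simp only [Pi.add_apply, Pi.sub_apply] at *
          rw [hω]
      _ =ᵐ[μ] fun ω => (μ[Y1|m]) ω - (μ[Y0|m]) ω := by
          have hμμ : μ[fun ω => (μ[Y1|m]) ω - (μ[Y0|m]) ω|m]
              = fun ω => (μ[Y1|m]) ω - (μ[Y0|m]) ω :=
            condExp_of_stronglyMeasurable hm
              (stronglyMeasurable_condExp.sub stronglyMeasurable_condExp)
              hμdiff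
          rw [hμμ]
          filter_upwards [hG1, hG0] with ω h1 h2
          simp only [Pi.add_apply, Pi.sub_apply, Pi.zero_apply] at *
          rw [h1, h2]
          ring
      _ =ᵐ[μ] μ[fun ω => Y1 ω - Y0 ω|m] := (condExp_sub hY1i hY0i m).symm
  -- pointwise rewriting of the AIPW integrand
  have hFG : (fun ω => A ω * (Y ω - (μ[Y1|m]) ω) / (μ[A|m]) ω
        - (1 - A ω) * (Y ω - (μ[Y0|m]) ω) / (1 - (μ[A|m]) ω)
        + (μ[Y1|m]) ω - (μ[Y0|m]) ω)
      = fun ω => ((μ[A|m]) ω)⁻¹ * (A ω * (Y1 ω - (μ[Y1|m]) ω))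
        - (1 - (μ[A|m]) ω)⁻¹ * ((1 - A ω) * (Y0 ω - (μ[Y0|m]) ω))
        + ((μ[Y1|m]) ω - (μ[Y0|m]) ω) := by
    funext ω
    rcases hA01 ω with h|h <;> rw [hYdef ω, h] <;> ring
  rw [hFG]
  calc μ[fun ω => ((μ[A|m]) ω)⁻¹ * (A ω * (Y1 ω - (μ[Y1|m]) ω))
        - (1 - (μ[A|m]) ω)⁻¹ * ((1 - A ω) * (Y0 ω - (μ[Y0|m]) ω))
        + ((μ[Y1|m]) ω - (μ[Y0|m]) ω)|mZ]
      =ᵐ[μ] μ[μ[fun ω => ((μ[A|m]) ω)⁻¹ * (A ω * (Y1 ω - (μ[Y1|m]) ω))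
        - (1 - (μ[A|m]) ω)⁻¹ * ((1 - A ω) * (Y0 ω - (μ[Y0|m]) ω))
        + ((μ[Y1|m]) ω - (μ[Y0|m]) ω)|m]|mZ] := (condExp_condExp_of_le hZ hm).symm
    _ =ᵐ[μ] μ[μ[fun ω => Y1 ω - Y0 ω|m]|mZ] := condExp_congr_ae hcore
    _ =ᵐ[μ] μ[fun ω => Y1 ω - Y0 ω|mZ] := condExp_condExp_of_le hZ hm

/-- AIPW representation of the GATE: under unconfoundedness and strict
overlap, with `μ1(X) = E[Y1 | σ(X)]` and `μ0(X) = E[Y0 | σ(X)]`,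
`E[ A·(Y − μ1(X))/π(X) − (1−A)·(Y − μ0(X))/(1 − π(X)) + μ1(X) − μ0(X) | σ(Z) ]
  = E[Y1 − Y0 | σ(Z)]` a.s. -/
theorem aipw_representation_of_gate
    {Ω : Type*} [MeasurableSpace Ω] [StandardBorelSpace Ω]
    {S : Type*} [MeasurableSpace S]
    (μ : Measure Ω) [IsProbabilityMeasure μ]
    (A : Ω → ℝ) (hAm : Measurable A) (hA01 : ∀ ω, A ω = 0 ∨ A ω = 1)
    (X : Ω → S) (hXm : Measurable X)
    (Y0 Y1 : Ω → ℝ) (hY0m : Measurable Y0) (hY1m : Measurable Y1)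
    (hY0i : Integrable Y0 μ) (hY1i : Integrable Y1 μ)
    (Y : Ω → ℝ) (hYdef : ∀ ω, Y ω = A ω * Y1 ω + (1 - A ω) * Y0 ω)
    (huncf : CondIndepFun (MeasurableSpace.comap X inferInstance) (hXm.comap_le)
      A (fun ω => (Y0 ω, Y1 ω)) μ)
    (δ : ℝ) (hδ0 : 0 < δ) (hδhalf : δ < 1 / 2)
    (hover : ∀ᵐ ω ∂μ, δ ≤ (μ[A | MeasurableSpace.comap X inferInstance]) ω
      ∧ (μ[A | MeasurableSpace.comap X inferInstance]) ω ≤ 1 - δ)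
    (g : S → ℝ) (hg : Measurable g) :
    μ[fun ω =>
        A ω * (Y ω - (μ[Y1 | MeasurableSpace.comap X inferInstance]) ω)
          / (μ[A | MeasurableSpace.comap X inferInstance]) ω
        - (1 - A ω) * (Y ω - (μ[Y0 | MeasurableSpace.comap X inferInstance]) ω)
          / (1 - (μ[A | MeasurableSpace.comap X inferInstance]) ω)
        + (μ[Y1 | MeasurableSpace.comap X inferInstance]) ω
        - (μ[Y0 | MeasurableSpace.comap X inferInstance]) ω
      | MeasurableSpace.comap (fun ω => g (X ω)) inferInstance]
      =ᵐ[μ]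
    μ[fun ω => Y1 ω - Y0 ω
      | MeasurableSpace.comap (fun ω => g (X ω)) inferInstance] := by
  have hZ : MeasurableSpace.comap (fun ω => g (X ω)) inferInstance
      ≤ MeasurableSpace.comap X inferInstance := by
    show MeasurableSpace.comap (g ∘ X) inferInstance ≤ MeasurableSpace.comap X inferInstance
    rw [← MeasurableSpace.comap_comp]
    exact MeasurableSpace.comap_mono hg.comap_le
  exact aipw_core μ hXm.comap_le hZ hAm hA01 hY0m hY1m hY0i hY1i hYdef huncf hδ0 hover
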